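/- Let n ≥ 2 and let Φ denote the cumulative distribution function of the standard Gaussian distribution N(0,1). Let μ be a probability mass function on {0,1}^n × {0,1}^n with μ(x,y) > 0 for every (x,y). Then the function L(A,c) := Σ_{(x,y) ∈ {0,1}^n × {0,1}^n} μ(x,y) · Σ_{i=1}^n [ x_i · log(1 − Φ(c_i − (Ay)_i)) + (1 − x_i) · log Φ(c_i − (Ay)_i) ] is strictly concave as a function of (A,c) on ℝ^{n×n} × ℝ^n. -/

import Mathlib

open Matrix

/-- The real value of a binary observation coordinate. -/
def bval (b : Bool) : ℝ := if b then 1 else 0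

/-- CDF of the standard Gaussian distribution `N(0,1)`. -/
noncomputable def gaussCDF (x : ℝ) : ℝ :=
  ((ProbabilityTheory.gaussianReal 0 1) (Set.Iic x)).toReal

open MeasureTheory ProbabilityTheory Real Set Filter Topology

noncomputable def gpdf (x : ℝ) : ℝ := gaussianPDFReal 0 1 x

lemma gpdf_eq (x : ℝ) : gpdf x = (Real.sqrt (2 * π))⁻¹ * Real.exp (-x ^ 2 / 2) := by
  simp [gpdf, gaussianPDFReal]

lemma gpdf_pos (x : ℝ) : 0 < gpdf x := gaussianPDFReal_pos 0 1 x one_ne_zero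

lemma gpdf_cont : Continuous gpdf := by
  simp only [funext gpdf_eq]
  fun_prop

lemma gpdf_integrable : Integrable gpdf := integrable_gaussianPDFReal 0 1

lemma gpdf_hasDeriv (x : ℝ) : HasDerivAt gpdf (-x * gpdf x) x := by
  have h1 : HasDerivAt (fun x : ℝ => -x ^ 2 / 2) (-x) x := by
    have := ((hasDerivAt_pow 2 x).neg).div_const 2
    simpa using this.congr_deriv (by ring)
  have h2 := (h1.exp).const_mul (Real.sqrt (2 * π))⁻¹
  rw [funext gpdf_eq]
  convert h2 using 1
  · rfl
  · rfl
  beta_reduce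
  ring

lemma gaussCDF_eq (x : ℝ) : gaussCDF x = ∫ t in Iic x, gpdf t := by
  rw [gaussCDF, gaussianReal_apply_eq_integral 0 one_ne_zero,
    ENNReal.toReal_ofReal (integral_nonneg fun t => gaussianPDFReal_nonneg 0 1 t)]
  rfl

lemma setIntegral_gpdf_pos {s : Set ℝ} (hs : 0 < volume s) :
    0 < ∫ t in s, gpdf t := by
  rw [setIntegral_pos_iff_support_of_nonneg_ae
    (ae_of_all _ fun t => (gpdf_pos t).le) gpdf_integrable.integrableOn]
  have : Function.support gpdf = univ := by
    ext t; simp [(gpdf_pos t).ne']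
  rwa [this, univ_inter]

lemma gaussCDF_pos (x : ℝ) : 0 < gaussCDF x := by
  rw [gaussCDF_eq]
  exact setIntegral_gpdf_pos (by simp)

lemma gaussCDF_add_Ioi (x : ℝ) : gaussCDF x + ∫ t in Ioi x, gpdf t = 1 := by
  rw [gaussCDF_eq, intervalIntegral.integral_Iic_add_Ioi gpdf_integrable.integrableOn gpdf_integrable.integrableOn]
  exact integral_gaussianPDFReal_eq_one 0 one_ne_zero

lemma gaussCDF_lt_one (x : ℝ) : gaussCDF x < 1 := by
  have h := gaussCDF_add_Ioi x
  have h2 : 0 < ∫ t in Ioi x, gpdf t := setIntegral_gpdf_pos (by simp)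
  linarith

lemma one_sub_gaussCDF (x : ℝ) : 1 - gaussCDF x = gaussCDF (-x) := by
  have h := gaussCDF_add_Ioi x
  have : gaussCDF (-x) = ∫ t in Ioi x, gpdf t := by
    rw [gaussCDF_eq, ← integral_comp_neg_Ioi]
    congr 1; ext t; rw [gpdf_eq, gpdf_eq, neg_pow]; norm_num
  linarith

lemma gaussCDF_hasDeriv (x : ℝ) : HasDerivAt gaussCDF (gpdf x) x := by
  have key : ∀ y, gaussCDF y = gaussCDF 0 + ∫ t in (0:ℝ)..y, gpdf t := by
    intro y
    rw [← intervalIntegral.integral_Iic_sub_Iic gpdf_integrable.integrableOn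
      gpdf_integrable.integrableOn, ← gaussCDF_eq, ← gaussCDF_eq]
    ring
  rw [funext key]
  exact (intervalIntegral.integral_hasDerivAt_right gpdf_integrable.intervalIntegrable
    (gpdf_cont.stronglyMeasurableAtFilter _ _) gpdf_cont.continuousAt).const_add _

lemma gpdf_tendsto_atBot : Tendsto gpdf atBot (𝓝 0) := by
  have h1 : Tendsto (fun t : ℝ => t ^ 2) atBot atTop := by
    have h0 : Tendsto (fun t : ℝ => (-t) ^ 2) atBot atTop :=
      (tendsto_pow_atTop (α := ℝ) (by norm_num : 2 ≠ 0)).comp tendsto_neg_atBot_atTop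
    simpa [neg_pow] using h0
  have h2 : Tendsto (fun t : ℝ => Real.exp (t ^ 2 / 2)) atBot atTop :=
    Real.tendsto_exp_atTop.comp (h1.atTop_div_const two_pos)
  have h3 : Tendsto (fun t : ℝ => Real.exp (-t ^ 2 / 2)) atBot (𝓝 0) := by
    have := h2.inv_tendsto_atTop
    convert this using 2 with t
    simp only [Pi.inv_apply, ← Real.exp_neg]
    ring_nf
  have := h3.const_mul (Real.sqrt (2 * π))⁻¹
  simpa [funext gpdf_eq] using this

lemma integral_mul_gpdf (x : ℝ) : ∫ t in Iic x, t * gpdf t = -gpdf x := by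
  have hint : Integrable (fun t : ℝ => t * gpdf t) := by
    have := (integrable_mul_exp_neg_mul_sq (by norm_num : (0:ℝ) < 1/2)).const_mul
      ((Real.sqrt (2 * π))⁻¹)
    refine this.congr (ae_of_all _ fun t => ?_)
    simp only [gpdf_eq]
    rw [show -(1/2) * t ^ 2 = -t ^ 2 / 2 by ring]
    ring
  have h := integral_Iic_of_hasDerivAt_of_tendsto' (a := x)
    (f := fun t => -gpdf t) (f' := fun t => t * gpdf t)
    (fun t _ => ((gpdf_hasDeriv t).neg).congr_deriv (by ring)) hint.integrableOn
    (by simpa using gpdf_tendsto_atBot.neg)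
  simpa using h

lemma mills {x : ℝ} (hx : x < 0) : gaussCDF x < gpdf x / (-x) := by
  have hxne : x ≠ 0 := hx.ne
  have hint1 : IntegrableOn gpdf (Iic x) := gpdf_integrable.integrableOn
  have hint2 : IntegrableOn (fun t => (t / x) * gpdf t) (Iic x) := by
    have : Integrable (fun t : ℝ => (t / x) * gpdf t) := by
      have := (integrable_mul_exp_neg_mul_sq (by norm_num : (0:ℝ) < 1/2)).const_mul
        ((Real.sqrt (2 * π))⁻¹ / x)
      refine this.congr (ae_of_all _ fun t => ?_)
      simp only [gpdf_eq]
      rw [show -(1/2) * t ^ 2 = -t ^ 2 / 2 by ring]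
      ring
    exact this.integrableOn
  have hlt : ∫ t in Iic x, gpdf t < ∫ t in Iic x, (t / x) * gpdf t := by
    rw [← sub_pos, ← integral_sub hint2 hint1]
    have hpos : 0 < ∫ t in Iic x, ((t / x) * gpdf t - gpdf t) := by
      rw [setIntegral_pos_iff_support_of_nonneg_ae]
      · refine lt_of_lt_of_le ?_ (measure_mono (?_ : Iio x ⊆ _))
        · simp
        · intro t ht
          have htx : t < x := ht
          refine ⟨?_, le_of_lt htx⟩
          have h1 : (1:ℝ) < t / x := by
            rw [lt_div_iff_of_neg hx]
            linarith
          have : 0 < (t / x) * gpdf t - gpdf t := by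
            nlinarith [gpdf_pos t]
          exact this.ne'
      · rw [Filter.EventuallyLE, MeasureTheory.ae_restrict_iff' measurableSet_Iic]
        refine ae_of_all _ fun t ht => ?_
        have htx : t ≤ x := ht
        have h1 : (1:ℝ) ≤ t / x := by
          rw [le_div_iff_of_neg hx]
          linarith
        simp only [Pi.zero_apply]
        nlinarith [gpdf_pos t]
      · exact hint2.sub hint1
    linarith
  have heq : ∫ t in Iic x, (t / x) * gpdf t = gpdf x / (-x) := by
    have : ∀ t : ℝ, (t / x) * gpdf t = x⁻¹ * (t * gpdf t) := fun t => by ring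
    simp only [this]
    rw [MeasureTheory.integral_const_mul, integral_mul_gpdf]
    rw [eq_div_iff (by linarith : -x ≠ 0)]
    field_simp
  rw [gaussCDF_eq]
  rwa [heq] at hlt

lemma key_pos (x : ℝ) : 0 < x * gaussCDF x + gpdf x := by
  rcases le_or_gt 0 x with hx | hx
  · have := gpdf_pos x
    have := gaussCDF_pos x
    nlinarith
  · have h := mills hx
    rw [lt_div_iff₀ (by linarith)] at h
    nlinarith

lemma logCDF_strictConcave : StrictConcaveOn ℝ Set.univ (fun x => Real.log (gaussCDF x)) := by
  apply strictConcaveOn_of_deriv2_neg convex_univ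
  · exact (Continuous.log
      ((fun x => (gaussCDF_hasDeriv x).differentiableAt.continuousAt) |> fun h =>
        continuous_iff_continuousAt.2 h) (fun x => (gaussCDF_pos x).ne')).continuousOn
  · intro x _
    have hd1 : deriv (fun x => Real.log (gaussCDF x)) = fun x => gpdf x / gaussCDF x := by
      funext y
      exact (HasDerivAt.log (gaussCDF_hasDeriv y) (gaussCDF_pos y).ne').deriv
    have hd2 : HasDerivAt (fun y => gpdf y / gaussCDF y)
        ((-x * gpdf x * gaussCDF x - gpdf x * gpdf x) / (gaussCDF x) ^ 2) x :=
      (gpdf_hasDeriv x).div (gaussCDF_hasDeriv x) (gaussCDF_pos x).ne'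
    have : deriv^[2] (fun x => Real.log (gaussCDF x)) x
        = (-x * gpdf x * gaussCDF x - gpdf x * gpdf x) / (gaussCDF x) ^ 2 := by
      simp only [Function.iterate_succ, Function.iterate_zero, Function.comp_apply, id]
      rw [hd1, hd2.deriv]
    rw [this]
    apply div_neg_of_neg_of_pos
    · nlinarith [key_pos x, gpdf_pos x]
    · exact pow_pos (gaussCDF_pos x) 2

lemma G_lt {a b t s : ℝ} (hne : a ≠ b) (ht : 0 < t) (hs : 0 < s) (hts : t + s = 1) :
    t * Real.log (gaussCDF a) + s * Real.log (gaussCDF b)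
      < Real.log (gaussCDF (t * a + s * b)) := by
  simpa using logCDF_strictConcave.2 (mem_univ a) (mem_univ b) hne ht hs hts

lemma G_le {a b t s : ℝ} (ht : 0 < t) (hs : 0 < s) (hts : t + s = 1) :
    t * Real.log (gaussCDF a) + s * Real.log (gaussCDF b)
      ≤ Real.log (gaussCDF (t * a + s * b)) := by
  rcases eq_or_ne a b with rfl | hne
  · have h1 : t * a + s * a = a := by rw [← add_mul, hts, one_mul]
    rw [h1]
    have : t * Real.log (gaussCDF a) + s * Real.log (gaussCDF a)
        = Real.log (gaussCDF a) := by rw [← add_mul, hts, one_mul]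
    exact this.le
  · exact (G_lt hne ht hs hts).le

lemma term_lt (b : Bool) {p q t s : ℝ} (hne : p ≠ q) (ht : 0 < t) (hs : 0 < s)
    (hts : t + s = 1) :
    t * (bval b * Real.log (1 - gaussCDF p) + (1 - bval b) * Real.log (gaussCDF p))
      + s * (bval b * Real.log (1 - gaussCDF q) + (1 - bval b) * Real.log (gaussCDF q))
      < bval b * Real.log (1 - gaussCDF (t * p + s * q))
        + (1 - bval b) * Real.log (gaussCDF (t * p + s * q)) := by
  cases b
  · simpa [bval] using G_lt hne ht hs hts
  · simp only [bval, if_true, one_mul, sub_self, zero_mul, add_zero, mul_zero,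
      one_sub_gaussCDF]
    have h : -(t * p + s * q) = t * (-p) + s * (-q) := by ring
    rw [h]
    exact G_lt (by simpa using hne) ht hs hts

lemma term_le (b : Bool) {p q t s : ℝ} (ht : 0 < t) (hs : 0 < s) (hts : t + s = 1) :
    t * (bval b * Real.log (1 - gaussCDF p) + (1 - bval b) * Real.log (gaussCDF p))
      + s * (bval b * Real.log (1 - gaussCDF q) + (1 - bval b) * Real.log (gaussCDF q))
      ≤ bval b * Real.log (1 - gaussCDF (t * p + s * q))
        + (1 - bval b) * Real.log (gaussCDF (t * p + s * q)) := by
  rcases eq_or_ne p q with rfl | hne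
  · have h : t * p + s * p = p := by rw [← add_mul, hts, one_mul]
    rw [h]
    have : t * (bval b * Real.log (1 - gaussCDF p) + (1 - bval b) * Real.log (gaussCDF p))
        + s * (bval b * Real.log (1 - gaussCDF p) + (1 - bval b) * Real.log (gaussCDF p))
        = bval b * Real.log (1 - gaussCDF p) + (1 - bval b) * Real.log (gaussCDF p) := by
      rw [← add_mul, hts, one_mul]
    exact this.le
  · exact (term_lt b hne ht hs hts).le

lemma exists_sep {n : ℕ} (θ θ' : Matrix (Fin n) (Fin n) ℝ × (Fin n → ℝ)) (h : θ ≠ θ') :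
    ∃ (i : Fin n) (y : Fin n → Bool),
      θ.2 i - (θ.1.mulVec fun j => bval (y j)) i
        ≠ θ'.2 i - (θ'.1.mulVec fun j => bval (y j)) i := by
  by_contra hc
  push_neg at hc
  apply h
  have hzero : (fun _ : Fin n => bval false) = (0 : Fin n → ℝ) := by
    funext j; simp [bval]
  have hc2 : θ.2 = θ'.2 := by
    funext i
    have := hc i (fun _ => false)
    simpa [hzero, Matrix.mulVec_zero] using this
  have hc1 : θ.1 = θ'.1 := by
    ext i j
    have hy : (fun j' : Fin n => bval (j' == j)) = Pi.single j (1:ℝ) := by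
      funext j'
      simp [bval, Pi.single_apply, beq_iff_eq]
    have := hc i (fun j' => j' == j)
    rw [hy, Matrix.mulVec_single, Matrix.mulVec_single, hc2] at this
    simpa using this
  exact Prod.ext hc1 hc2

lemma sum_term_le {n : ℕ} (x : Fin n → Bool) (p q : Fin n → ℝ) {t s : ℝ}
    (ht : 0 < t) (hs : 0 < s) (hts : t + s = 1) :
    t * (∑ i, (bval (x i) * Real.log (1 - gaussCDF (p i))
          + (1 - bval (x i)) * Real.log (gaussCDF (p i))))
      + s * (∑ i, (bval (x i) * Real.log (1 - gaussCDF (q i))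
          + (1 - bval (x i)) * Real.log (gaussCDF (q i))))
      ≤ ∑ i, (bval (x i) * Real.log (1 - gaussCDF (t * p i + s * q i))
          + (1 - bval (x i)) * Real.log (gaussCDF (t * p i + s * q i))) := by
  rw [Finset.mul_sum, Finset.mul_sum, ← Finset.sum_add_distrib]
  exact Finset.sum_le_sum fun i _ => term_le (x i) ht hs hts

lemma sum_term_lt {n : ℕ} (x : Fin n → Bool) (p q : Fin n → ℝ) {t s : ℝ}
    (i₀ : Fin n) (hne : p i₀ ≠ q i₀)
    (ht : 0 < t) (hs : 0 < s) (hts : t + s = 1) :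
    t * (∑ i, (bval (x i) * Real.log (1 - gaussCDF (p i))
          + (1 - bval (x i)) * Real.log (gaussCDF (p i))))
      + s * (∑ i, (bval (x i) * Real.log (1 - gaussCDF (q i))
          + (1 - bval (x i)) * Real.log (gaussCDF (q i))))
      < ∑ i, (bval (x i) * Real.log (1 - gaussCDF (t * p i + s * q i))
          + (1 - bval (x i)) * Real.log (gaussCDF (t * p i + s * q i))) := by
  rw [Finset.mul_sum, Finset.mul_sum, ← Finset.sum_add_distrib]
  exact Finset.sum_lt_sum (fun i _ => term_le (x i) ht hs hts)
    ⟨i₀, Finset.mem_univ _, term_lt (x i₀) hne ht hs hts⟩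


/-- **Strict concavity of the expected log-likelihood** (part of Theorem 4).
If `μ` is an everywhere-positive pmf on `{0,1}^n × {0,1}^n`, then
`L(A,c) = Σ_{(x,y)} μ(x,y) Σ_i [x_i log(1 − Φ(c_i − (Ay)_i)) + (1 − x_i) log Φ(c_i − (Ay)_i)]`
is strictly concave in `(A,c)` on `ℝ^{n×n} × ℝ^n`. -/
theorem stmt10 (n : ℕ) (hn : 2 ≤ n)
    (μ : (Fin n → Bool) × (Fin n → Bool) → ℝ)
    (hpos : ∀ z, 0 < μ z) (hsum : ∑ z, μ z = 1) :
    StrictConcaveOn ℝ Set.univ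
      (fun θ : Matrix (Fin n) (Fin n) ℝ × (Fin n → ℝ) =>
        ∑ z : (Fin n → Bool) × (Fin n → Bool), μ z *
          ∑ i, (bval (z.1 i) *
              Real.log (1 - gaussCDF (θ.2 i - (θ.1.mulVec (fun j => bval (z.2 j))) i))
            + (1 - bval (z.1 i)) *
              Real.log (gaussCDF (θ.2 i - (θ.1.mulVec (fun j => bval (z.2 j))) i)))) := by
  classical
  refine ⟨convex_univ, ?_⟩
  intro θ _ θ' _ hne t s ht hs hts
  obtain ⟨i₀, y₀, hsep⟩ := exists_sep θ θ' hne
  have lin : ∀ (y : Fin n → Bool) (i : Fin n),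
      ((t • θ + s • θ').2 i - ((t • θ + s • θ').1.mulVec fun j => bval (y j)) i)
        = t * (θ.2 i - (θ.1.mulVec fun j => bval (y j)) i)
          + s * (θ'.2 i - (θ'.1.mulVec fun j => bval (y j)) i) := by
    intro y i
    show (t • θ.2 + s • θ'.2) i - ((t • θ.1 + s • θ'.1).mulVec fun j => bval (y j)) i = _
    rw [Matrix.add_mulVec, Matrix.smul_mulVec, Matrix.smul_mulVec]
    simp only [Pi.add_apply, Pi.smul_apply, smul_eq_mul]
    ring
  simp only [smul_eq_mul, lin]
  rw [Finset.mul_sum, Finset.mul_sum, ← Finset.sum_add_distrib]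
  refine Finset.sum_lt_sum (fun z _ => ?_) ⟨(fun _ => false, y₀), Finset.mem_univ _, ?_⟩
  · have h := sum_term_le z.1 (fun i => θ.2 i - (θ.1.mulVec fun j => bval (z.2 j)) i)
      (fun i => θ'.2 i - (θ'.1.mulVec fun j => bval (z.2 j)) i) ht hs hts
    calc t * (μ z * _) + s * (μ z * _) = μ z * (t * _ + s * _) := by ring
      _ ≤ μ z * _ := mul_le_mul_of_nonneg_left h (hpos z).le
  · have h := sum_term_lt (fun _ : Fin n => false)
      (fun i => θ.2 i - (θ.1.mulVec fun j => bval (y₀ j)) i)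
      (fun i => θ'.2 i - (θ'.1.mulVec fun j => bval (y₀ j)) i) i₀ hsep ht hs hts
    calc t * (μ _ * _) + s * (μ _ * _) = μ _ * (t * _ + s * _) := by ring
      _ < μ _ * _ := mul_lt_mul_of_pos_left h (hpos _)
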